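/- arXiv:2006.06267 — 2 statements merged into one kernel-verified Lean document; each statement's English description precedes it below -/
import Mathlib

section
/- (Bernoulli/Binomial Taylor remainder, affine case.) For every real a, 0 ≤ log 2 + a/2 + a²/8 − log(1 + exp(a)) ≤ a⁴/192. Equivalently, with F(θ) = log(1 + exp(θ)) the log-normalizer of the Bernoulli family, the second-order Taylor polynomial of F at 0, namely F(0) + F′(0)a + F″(0)a²/2 = log 2 + a/2 + a²/8, is an upper bound for F(a), and the gap is at most a⁴/192 = (1/(8·4!))·a⁴. -/
open Real

/-- A function vanishing at 0 with nonneg derivative on `[0,∞)` is nonneg there. -/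
lemma aux_nonneg (f f' : ℝ → ℝ) (hd : ∀ x, HasDerivAt f (f' x) x)
    (h0 : f 0 = 0) (hpos : ∀ x, 0 ≤ x → 0 ≤ f' x) :
    ∀ x, 0 ≤ x → 0 ≤ f x := by
  intro x hx
  have hmono : MonotoneOn f (Set.Ici 0) := by
    apply monotoneOn_of_deriv_nonneg (convex_Ici 0)
    · exact (fun y _ => (hd y).continuousAt.continuousWithinAt)
    · exact fun y _ => (hd y).differentiableAt.differentiableWithinAt
    · intro y hy
      rw [(hd y).deriv]
      exact hpos y (le_of_lt (by simpa using hy))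
  have := hmono (Set.self_mem_Ici) (by exact hx) hx
  simpa [h0] using this

lemma g1_nonneg : ∀ x : ℝ, 0 ≤ x → 0 ≤ x * Real.cosh x - Real.sinh x := by
  apply aux_nonneg _ (fun x => x * Real.sinh x)
  · intro x
    have h1 : HasDerivAt (fun x : ℝ => x * Real.cosh x) (1 * Real.cosh x + x * Real.sinh x) x :=
      (hasDerivAt_id x).mul (Real.hasDerivAt_cosh x)
    have := h1.sub (Real.hasDerivAt_sinh x)
    exact this.congr_deriv (by ring)
  · simp
  · intro x hx
    exact mul_nonneg hx (Real.sinh_nonneg_iff.mpr hx)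

lemma g2_nonneg : ∀ x : ℝ, 0 ≤ x →
    0 ≤ Real.sinh x - (x - x ^ 3 / 3) * Real.cosh x := by
  apply aux_nonneg _ (fun x => x ^ 2 * Real.cosh x - (x - x ^ 3 / 3) * Real.sinh x)
  · intro x
    have h1 : HasDerivAt (fun x : ℝ => x - x ^ 3 / 3) (1 - 3 * x ^ 2 / 3) x := by
      have := ((hasDerivAt_pow 3 x).div_const 3)
      have := (hasDerivAt_id x).sub this
      exact this.congr_deriv (by ring)
    have h2 := (h1.mul (Real.hasDerivAt_cosh x))
    have := (Real.hasDerivAt_sinh x).sub h2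
    exact this.congr_deriv (by ring)
  · simp
  · intro x hx
    have hs := Real.sinh_nonneg_iff.mpr hx
    have hc := Real.cosh_pos x
    have h1 := g1_nonneg x hx
    nlinarith [sq_nonneg x, mul_nonneg (mul_nonneg hx hx) (mul_nonneg hx hs),
      mul_nonneg (mul_nonneg hx hx) h1]

lemma g3_nonneg : ∀ x : ℝ, 0 ≤ x → 0 ≤ x ^ 2 / 2 - Real.log (Real.cosh x) := by
  apply aux_nonneg _ (fun x => x - Real.sinh x / Real.cosh x)
  · intro x
    have hlog : HasDerivAt (fun x : ℝ => Real.log (Real.cosh x))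
        (Real.sinh x / Real.cosh x) x :=
      (Real.hasDerivAt_cosh x).log (Real.cosh_pos x).ne'
    have := ((hasDerivAt_pow 2 x).div_const 2).sub hlog
    exact this.congr_deriv (by push_cast; ring)
  · simp
  · intro x hx
    have hc := Real.cosh_pos x
    have h1 := g1_nonneg x hx
    rw [sub_nonneg, div_le_iff₀ hc]
    linarith

lemma g4_nonneg : ∀ x : ℝ, 0 ≤ x →
    0 ≤ Real.log (Real.cosh x) - x ^ 2 / 2 + x ^ 4 / 12 := by
  apply aux_nonneg _ (fun x => Real.sinh x / Real.cosh x - x + x ^ 3 / 3)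
  · intro x
    have hlog : HasDerivAt (fun x : ℝ => Real.log (Real.cosh x))
        (Real.sinh x / Real.cosh x) x :=
      (Real.hasDerivAt_cosh x).log (Real.cosh_pos x).ne'
    have := (hlog.sub ((hasDerivAt_pow 2 x).div_const 2)).add ((hasDerivAt_pow 4 x).div_const 12)
    exact this.congr_deriv (by push_cast; ring)
  · simp
  · intro x hx
    have hc := Real.cosh_pos x
    have h2 := g2_nonneg x hx
    have : (x - x ^ 3 / 3) ≤ Real.sinh x / Real.cosh x := by
      rw [le_div_iff₀ hc]; linarith
    linarith

lemma logcosh_bounds (x : ℝ) :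
    0 ≤ x ^ 2 / 2 - Real.log (Real.cosh x) ∧
    x ^ 2 / 2 - Real.log (Real.cosh x) ≤ x ^ 4 / 12 := by
  have hx : (0:ℝ) ≤ |x| := abs_nonneg x
  have h3 := g3_nonneg |x| hx
  have h4 := g4_nonneg |x| hx
  rw [Real.cosh_abs] at h3 h4
  rw [sq_abs] at h3 h4
  have habs4 : |x| ^ 4 = x ^ 4 := by
    rw [show (4:ℕ) = 2 * 2 from rfl, pow_mul, pow_mul, sq_abs]
  rw [habs4] at h4
  constructor <;> linarith

lemma log_one_add_exp (a : ℝ) :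
    Real.log (1 + Real.exp a) = a / 2 + Real.log 2 + Real.log (Real.cosh (a / 2)) := by
  have key : 1 + Real.exp a = Real.exp (a / 2) * (2 * Real.cosh (a / 2)) := by
    have h1 : Real.exp (a / 2) * Real.exp (a / 2) = Real.exp a := by
      rw [← Real.exp_add]; norm_num
    have h2 : Real.exp (a / 2) * Real.exp (-(a / 2)) = 1 := by
      rw [← Real.exp_add]; simp
    rw [Real.cosh_eq]
    linear_combination -h1 - h2
  rw [key, Real.log_mul (Real.exp_pos _).ne' (by positivity),
    Real.log_exp, Real.log_mul (by norm_num) (Real.cosh_pos _).ne']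
  ring

/-- Bernoulli/Binomial Taylor remainder bound (affine case): for all real `a`,
`0 ≤ log 2 + a/2 + a²/8 − log(1 + exp a) ≤ a⁴/192`; i.e. the second-order
Taylor polynomial at 0 of the Bernoulli log-normalizer `F(θ) = log(1 + exp θ)`
bounds `F` from above, with gap at most `a⁴/(8·4!)`. -/
theorem stmt_8 (a : ℝ) :
    0 ≤ Real.log 2 + a / 2 + a ^ 2 / 8 - Real.log (1 + Real.exp a) ∧
    Real.log 2 + a / 2 + a ^ 2 / 8 - Real.log (1 + Real.exp a) ≤ a ^ 4 / 192 := by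
  have hb := logcosh_bounds (a / 2)
  rw [log_one_add_exp a]
  constructor <;> [skip; skip] <;>
  · obtain ⟨h1, h2⟩ := hb
    have e2 : (a / 2) ^ 2 = a ^ 2 / 4 := by ring
    have e4 : (a / 2) ^ 4 = a ^ 4 / 16 := by ring
    rw [e2] at h1 h2
    rw [e4] at h2
    linarith
end

section
/- Let d ≥ κ ≥ 1, let β > 0 and α > 0, and let Ŝ be a symmetric positive semidefinite real d×d matrix with eigenvalues λ₁ ≥ λ₂ ≥ … ≥ λ_d and corresponding orthonormal eigenvectors u₁, …, u_d. For W ∈ ℝ^{d×κ} define C(W) = α·I_d + β⁻¹·W Wᵀ and L(W) = −(1/2)·( tr(C(W)⁻¹ Ŝ) + β·log det C(W) ). Let U_κ ∈ ℝ^{d×κ} have columns u₁, …, u_κ, let k_j = λ_j if λ_j ≥ β·α and k_j = β·α otherwise, and set Ŵ = U_κ · diag( (k₁ − βα)^{1/2}, …, (k_κ − βα)^{1/2} ). Then Ŵ is a global maximizer of L: for all W ∈ ℝ^{d×κ}, L(W) ≤ L(Ŵ). Moreover, for any orthogonal κ×κ matrix R, L(Ŵ R) = L(Ŵ), so the maximizer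 is invariant under rotations. -/
open Matrix

noncomputable def gfun (β α s : ℝ) : ℝ :=
  if β * α ≤ s then s / α + β * Real.log α - β - β * Real.log (s / β) else 0

noncomputable def cfun (β α s : ℝ) : ℝ :=
  if β * α ≤ s then 1 / α - β / s else 0

lemma log_aux {x : ℝ} (hx : 0 < x) : Real.log x ≤ x - 1 :=
  Real.log_le_sub_one_of_pos hx

lemma gfun_nonneg {β α : ℝ} (hβ : 0 < β) (hα : 0 < α) (s : ℝ) : 0 ≤ gfun β α s := by
  unfold gfun
  split_ifs with h
  · have hs : 0 < s := lt_of_lt_of_le (mul_pos hβ hα) h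
    have hx : 0 < s / (β * α) := div_pos hs (mul_pos hβ hα)
    have h1 : Real.log (s / (β * α)) ≤ s / (β * α) - 1 := log_aux hx
    have h2 : Real.log (s / β) = Real.log (s / (β * α)) + Real.log α := by
      rw [← Real.log_mul (ne_of_gt hx) (ne_of_gt hα)]
      congr 1
      field_simp
    have h3 : β * (s / (β * α)) = s / α := by field_simp
    rw [h2]
    nlinarith [mul_le_mul_of_nonneg_left h1 hβ.le]
  · exact le_refl 0

lemma cfun_nonneg {β α : ℝ} (hβ : 0 < β) (hα : 0 < α) (s : ℝ) : 0 ≤ cfun β α s := by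
  unfold cfun
  split_ifs with h
  · have hs : 0 < s := lt_of_lt_of_le (mul_pos hβ hα) h
    rw [sub_nonneg, div_le_div_iff₀ hs hα]
    nlinarith
  · exact le_refl 0

lemma cfun_mono {β α : ℝ} (hβ : 0 < β) (hα : 0 < α) {s t : ℝ} (hst : s ≤ t) :
    cfun β α s ≤ cfun β α t := by
  unfold cfun
  split_ifs with h1 h2 h2
  · have hs : 0 < s := lt_of_lt_of_le (mul_pos hβ hα) h1
    have ht : 0 < t := lt_of_lt_of_le hs hst
    have : β / t ≤ β / s := div_le_div_of_nonneg_left hβ.le hs hst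
    linarith
  · exact absurd (le_trans h1 hst) h2
  · have ht : 0 < t := lt_of_lt_of_le (mul_pos hβ hα) h2
    rw [sub_nonneg, div_le_div_iff₀ ht hα]
    nlinarith
  · exact le_refl 0

lemma gfun_tangent {β α : ℝ} (hβ : 0 < β) (hα : 0 < α) {s t : ℝ} (ht : 0 ≤ t) :
    gfun β α s + cfun β α s * (t - s) ≤ gfun β α t := by
  unfold gfun cfun
  split_ifs with h1 h2 h2
  · -- both ≥ βα
    have hs' : 0 < s := lt_of_lt_of_le (mul_pos hβ hα) h1
    have ht' : 0 < t := lt_of_lt_of_le (mul_pos hβ hα) h2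
    have hx : 0 < t / s := div_pos ht' hs'
    have hl : Real.log (t / s) ≤ t / s - 1 := log_aux hx
    have hlog : Real.log (t / β) = Real.log (t / s) + Real.log (s / β) := by
      rw [← Real.log_mul (ne_of_gt hx) (ne_of_gt (div_pos hs' hβ))]
      congr 1; field_simp
    have e1 : (1 / α - β / s) * (t - s) = t / α - s / α - β * (t / s) + β := by
      field_simp; ring
    have e2 : β * Real.log (t / s) ≤ β * (t / s) - β := by
      nlinarith [mul_le_mul_of_nonneg_left hl hβ.le]
    rw [hlog, e1]; linarith
  · -- s ≥ βα, t < βα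
    have hs' : 0 < s := lt_of_lt_of_le (mul_pos hβ hα) h1
    have hx : 0 < β * α / s := div_pos (mul_pos hβ hα) hs'
    have hl : Real.log (β * α / s) ≤ β * α / s - 1 := log_aux hx
    have hlog : Real.log (s / β) = Real.log α - Real.log (β * α / s) := by
      rw [Real.log_div (ne_of_gt (mul_pos hβ hα)) (ne_of_gt hs'),
        Real.log_div (ne_of_gt hs') (ne_of_gt hβ), Real.log_mul (ne_of_gt hβ) (ne_of_gt hα)]
      ring
    have e1 : (1 / α - β / s) * (t - s) = t / α - s / α - (t / α) * (β * α / s) + β := by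
      field_simp; ring
    have hr : β * α / s ≤ 1 := by rw [div_le_one hs']; exact h1
    have ht2 : t / α ≤ β := by rw [div_le_iff₀ hα]; linarith [le_of_not_ge h2]
    have hprod : 0 ≤ (β - t / α) * (1 - β * α / s) := by
      apply mul_nonneg <;> linarith
    have e2 : β * Real.log (β * α / s) ≤ β * (β * α / s) - β := by
      nlinarith [mul_le_mul_of_nonneg_left hl hβ.le]
    rw [hlog, e1]; nlinarith
  · -- s < βα ≤ t
    have := gfun_nonneg hβ hα t
    unfold gfun at this
    rw [if_pos h2] at this
    linarith
  · linarith

lemma scalar1 {β α : ℝ} (hβ : 0 < β) (hα : 0 < α) {s c : ℝ} (hs : 0 ≤ s) (hc : α ≤ c) :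
    s / α + β * Real.log α - gfun β α s ≤ s / c + β * Real.log c := by
  have hc' : 0 < c := lt_of_lt_of_le hα hc
  unfold gfun
  split_ifs with h1
  · have hs' : 0 < s := lt_of_lt_of_le (mul_pos hβ hα) h1
    have hx : 0 < s / (β * c) := div_pos hs' (mul_pos hβ hc')
    have hl : Real.log (s / (β * c)) ≤ s / (β * c) - 1 := log_aux hx
    have hlog : Real.log (s / β) = Real.log (s / (β * c)) + Real.log c := by
      rw [← Real.log_mul (ne_of_gt hx) (ne_of_gt hc')]
      congr 1; field_simp
    have e1 : β * (s / (β * c)) = s / c := by field_simp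
    have e2 : β * Real.log (s / (β * c)) ≤ β * (s / (β * c)) - β := by
      nlinarith [mul_le_mul_of_nonneg_left hl hβ.le]
    rw [hlog]; linarith
  · have hx : 0 < α / c := div_pos hα hc'
    have hl : Real.log (α / c) ≤ α / c - 1 := log_aux hx
    have hlog : Real.log α = Real.log (α / c) + Real.log c := by
      rw [← Real.log_mul (ne_of_gt hx) (ne_of_gt hc')]
      congr 1; field_simp
    have f1 : β * Real.log (α / c) ≤ β * (α / c) - β := by
      nlinarith [mul_le_mul_of_nonneg_left hl hβ.le]
    have f2 : s / α - s / c = s * (c - α) / (α * c) := by field_simp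
    have f3 : s * (c - α) / (α * c) ≤ β * α * (c - α) / (α * c) := by
      gcongr <;> linarith [le_of_not_ge h1]
    have f4 : β * α * (c - α) / (α * c) = β - β * (α / c) := by field_simp
    rw [hlog]; linarith

lemma card_lt_filter (d m : ℕ) (hm : m ≤ d) :
    (Finset.univ.filter (fun i : Fin d => (i : ℕ) < m)).card = m := by
  have : Finset.univ.filter (fun i : Fin d => (i : ℕ) < m)
      = Finset.map (Fin.castLEEmb hm) Finset.univ := by
    ext i
    simp only [Finset.mem_filter, Finset.mem_univ, true_and, Finset.mem_map]
    constructor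
    · intro h
      exact ⟨⟨(i : ℕ), h⟩, by simp [Fin.castLEEmb, Fin.ext_iff]⟩
    · rintro ⟨j, -, rfl⟩
      simpa [Fin.castLEEmb] using j.isLt
  rw [this, Finset.card_map, Finset.card_univ, Fintype.card_fin]

lemma knapsack {d m : ℕ} (hm : m ≤ d) (lam p : Fin d → ℝ)
    (hanti : ∀ i j : Fin d, i ≤ j → lam j ≤ lam i) (hlam0 : ∀ i, 0 ≤ lam i)
    (hp0 : ∀ i, 0 ≤ p i) (hp1 : ∀ i, p i ≤ 1) (hsum : ∑ i, p i ≤ (m : ℝ)) :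
    ∑ i, lam i * p i ≤ ∑ i ∈ Finset.univ.filter (fun i : Fin d => (i : ℕ) < m), lam i := by
  classical
  set F : Finset (Fin d) := Finset.univ.filter (fun i : Fin d => (i : ℕ) < m) with hF
  set t : ℝ := if h : m < d then lam ⟨m, h⟩ else 0 with ht
  have ht0 : 0 ≤ t := by
    rw [ht]; split_ifs with h
    · exact hlam0 _
    · exact le_refl 0
  have htlo : ∀ i : Fin d, (i : ℕ) < m → t ≤ lam i := by
    intro i hi
    rw [ht]
    split_ifs with h
    · exact hanti i ⟨m, h⟩ (by simp [Fin.le_def]; omega)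
    · exact hlam0 i
  have hthi : ∀ i : Fin d, m ≤ (i : ℕ) → lam i ≤ t := by
    intro i hi
    rw [ht]
    split_ifs with h
    · exact hanti ⟨m, h⟩ i (by simp [Fin.le_def]; omega)
    · exact absurd i.isLt (by omega)
  have key : ∀ i : Fin d, lam i * p i ≤ (if (i : ℕ) < m then lam i - t else 0) + t * p i := by
    intro i
    split_ifs with h
    · nlinarith [htlo i h, hp1 i, hp0 i]
    · nlinarith [hthi i (by omega), hp0 i]
  have hcard : F.card = m := card_lt_filter d m hm
  calc ∑ i, lam i * p i ≤ ∑ i : Fin d, ((if (i : ℕ) < m then lam i - t else 0) + t * p i) :=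
        Finset.sum_le_sum (fun i _ => key i)
    _ = (∑ i ∈ F, (lam i - t)) + t * ∑ i : Fin d, p i := by
        rw [Finset.sum_add_distrib, ← Finset.mul_sum, Finset.sum_ite, Finset.sum_const_zero,
          add_zero]
    _ ≤ (∑ i ∈ F, (lam i - t)) + t * m := by
        have := mul_le_mul_of_nonneg_left hsum ht0
        linarith
    _ = ∑ i ∈ F, lam i := by
        rw [Finset.sum_sub_distrib, Finset.sum_const, hcard, nsmul_eq_mul]
        ring

lemma abel_nonneg : ∀ (n : ℕ) (dd w : ℕ → ℝ), (∀ i, 0 ≤ w i) →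
    (∀ i j : ℕ, i ≤ j → w j ≤ w i) →
    (∀ i < n, 0 ≤ ∑ j ∈ Finset.range (i + 1), dd j) →
    0 ≤ ∑ j ∈ Finset.range n, w j * dd j := by
  intro n
  induction n with
  | zero => intro dd w _ _ _; simp
  | succ n ih =>
    intro dd w hw0 hwa hpre
    set w' : ℕ → ℝ := fun j => max (w j - w n) 0 with hw'
    have hw'0 : ∀ i, 0 ≤ w' i := fun i => le_max_right _ _
    have hw'a : ∀ i j : ℕ, i ≤ j → w' j ≤ w' i := by
      intro i j hij
      exact max_le_max (by linarith [hwa i j hij]) (le_refl 0)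
    have ihh : 0 ≤ ∑ j ∈ Finset.range n, w' j * dd j :=
      ih dd w' hw'0 hw'a (fun i hi => hpre i (Nat.lt_succ_of_lt hi))
    have hkey : ∀ j ∈ Finset.range n, w j * dd j = w' j * dd j + w n * dd j := by
      intro j hj
      have hjn : j ≤ n := le_of_lt (Finset.mem_range.mp hj)
      have : w' j = w j - w n := max_eq_left (by linarith [hwa j n hjn])
      rw [this]; ring
    have hsum : ∑ j ∈ Finset.range (n + 1), w j * dd j
        = (∑ j ∈ Finset.range n, w' j * dd j) + w n * ∑ j ∈ Finset.range (n + 1), dd j := by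
      rw [Finset.sum_range_succ, Finset.sum_congr rfl hkey, Finset.sum_add_distrib,
        ← Finset.mul_sum, Finset.sum_range_succ, mul_add]
      ring
    rw [hsum]
    have := mul_nonneg (hw0 n) (hpre n (Nat.lt_succ_self n))
    linarith

lemma hlp {β α : ℝ} (hβ : 0 < β) (hα : 0 < α) (n m : ℕ) (hn : n ≤ m) (a b : ℕ → ℝ)
    (ha : ∀ i j : ℕ, i ≤ j → j < n → a j ≤ a i)
    (hb0 : ∀ j, 0 ≤ b j)
    (hpart : ∀ i < n, ∑ j ∈ Finset.range (i + 1), a j ≤ ∑ j ∈ Finset.range (i + 1), b j) :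
    ∑ j ∈ Finset.range n, gfun β α (a j) ≤ ∑ j ∈ Finset.range m, gfun β α (b j) := by
  have step1 : ∀ j ∈ Finset.range n,
      gfun β α (a j) ≤ gfun β α (b j) - cfun β α (a j) * (b j - a j) := by
    intro j _
    have := gfun_tangent hβ hα (s := a j) (t := b j) (hb0 j)
    linarith
  set w : ℕ → ℝ := fun j => if j < n then cfun β α (a j) else 0 with hw
  have hw0 : ∀ i, 0 ≤ w i := by
    intro i
    rw [hw]
    dsimp only
    split_ifs
    · exact cfun_nonneg hβ hα _
    · exact le_refl 0
  have hwa : ∀ i j : ℕ, i ≤ j → w j ≤ w i := by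
    intro i j hij
    rw [hw]
    dsimp only
    split_ifs with h1 h2 h2
    · exact cfun_mono hβ hα (ha i j hij h1)
    · omega
    · exact cfun_nonneg hβ hα _
    · exact le_refl 0
  have step2 : 0 ≤ ∑ j ∈ Finset.range n, w j * (b j - a j) := by
    apply abel_nonneg n _ w hw0 hwa
    intro i hi
    rw [Finset.sum_sub_distrib]
    linarith [hpart i hi]
  have hwn : ∀ j ∈ Finset.range n, w j * (b j - a j) = cfun β α (a j) * (b j - a j) := by
    intro j hj
    rw [hw]
    dsimp only
    rw [if_pos (Finset.mem_range.mp hj)]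
  rw [Finset.sum_congr rfl hwn] at step2
  calc ∑ j ∈ Finset.range n, gfun β α (a j)
      ≤ ∑ j ∈ Finset.range n, (gfun β α (b j) - cfun β α (a j) * (b j - a j)) :=
        Finset.sum_le_sum step1
    _ = (∑ j ∈ Finset.range n, gfun β α (b j))
        - ∑ j ∈ Finset.range n, cfun β α (a j) * (b j - a j) := Finset.sum_sub_distrib _ _
    _ ≤ ∑ j ∈ Finset.range n, gfun β α (b j) := by linarith
    _ ≤ ∑ j ∈ Finset.range m, gfun β α (b j) := by
        apply Finset.sum_le_sum_of_subset_of_nonneg (Finset.range_subset_range.mpr hn)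
        intro j _ _
        exact gfun_nonneg hβ hα _

open Matrix in
lemma trace_diag_mul {d : ℕ} (f : Fin d → ℝ) (M : Matrix (Fin d) (Fin d) ℝ) :
    (Matrix.diagonal f * M).trace = ∑ i, f i * M i i := by
  rw [Matrix.trace]
  apply Finset.sum_congr rfl
  intro i _
  rw [Matrix.diag]
  rw [Matrix.diagonal_mul]

open Matrix in
lemma objective_formula {d : ℕ} (β : ℝ) (S V : Matrix (Fin d) (Fin d) ℝ)
    (hV : Vᵀ * V = 1) (c : Fin d → ℝ) (hc : ∀ i, 0 < c i) :
    ((V * Matrix.diagonal c * Vᵀ)⁻¹ * S).trace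
      + β * Real.log (V * Matrix.diagonal c * Vᵀ).det
    = ∑ i, ((Vᵀ * S * V) i i / c i + β * Real.log (c i)) := by
  have hVV : V * Vᵀ = 1 := mul_eq_one_comm.mp hV
  have hinv : (V * Matrix.diagonal c * Vᵀ)⁻¹ = V * Matrix.diagonal (fun i => (c i)⁻¹) * Vᵀ := by
    apply Matrix.inv_eq_right_inv
    calc V * Matrix.diagonal c * Vᵀ * (V * Matrix.diagonal (fun i => (c i)⁻¹) * Vᵀ)
        = V * Matrix.diagonal c * (Vᵀ * V) * Matrix.diagonal (fun i => (c i)⁻¹) * Vᵀ := by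
          simp only [Matrix.mul_assoc]
      _ = V * (Matrix.diagonal c * Matrix.diagonal (fun i => (c i)⁻¹)) * Vᵀ := by
          rw [hV]; simp only [Matrix.mul_one, Matrix.mul_assoc]
      _ = V * Vᵀ := by
          rw [Matrix.diagonal_mul_diagonal]
          have : (fun i => c i * (c i)⁻¹) = fun _ => (1 : ℝ) := by
            funext i; exact mul_inv_cancel₀ (ne_of_gt (hc i))
          rw [this, Matrix.diagonal_one, Matrix.mul_one]
      _ = 1 := hVV
  have hdet : (V * Matrix.diagonal c * Vᵀ).det = ∏ i, c i := by
    rw [Matrix.det_mul, Matrix.det_mul, mul_comm (V.det), mul_assoc, ← Matrix.det_mul, hVV]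
    simp [Matrix.det_diagonal]
  have htr : ((V * Matrix.diagonal c * Vᵀ)⁻¹ * S).trace
      = ∑ i, (c i)⁻¹ * (Vᵀ * S * V) i i := by
    rw [hinv]
    have : V * Matrix.diagonal (fun i => (c i)⁻¹) * Vᵀ * S
        = V * (Matrix.diagonal (fun i => (c i)⁻¹) * (Vᵀ * S)) := by
      simp only [Matrix.mul_assoc]
    rw [this, Matrix.trace_mul_comm]
    simp only [Matrix.mul_assoc]
    rw [trace_diag_mul]
  rw [htr, hdet, Real.log_prod (fun i _ => ne_of_gt (hc i)), Finset.mul_sum,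
    ← Finset.sum_add_distrib]
  apply Finset.sum_congr rfl
  intro i _
  rw [div_eq_inv_mul]

lemma kyfan {d m : ℕ} (hm : m ≤ d) (lam : Fin d → ℝ)
    (hanti : ∀ i j : Fin d, i ≤ j → lam j ≤ lam i) (hlam0 : ∀ i, 0 ≤ lam i)
    (Q : Matrix (Fin d) (Fin d) ℝ)
    (hrow : ∀ k, ∑ i, (Q k i) ^ 2 = 1) (hcol : ∀ i, ∑ k, (Q k i) ^ 2 = 1)
    (G : Finset (Fin d)) (hG : G.card ≤ m) :
    ∑ i ∈ G, (∑ k, lam k * (Q k i) ^ 2)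
      ≤ ∑ l ∈ Finset.univ.filter (fun l : Fin d => (l : ℕ) < m), lam l := by
  have hswap : ∑ i ∈ G, (∑ k, lam k * (Q k i) ^ 2)
      = ∑ k, lam k * (∑ i ∈ G, (Q k i) ^ 2) := by
    rw [Finset.sum_comm]
    apply Finset.sum_congr rfl
    intro k _
    rw [Finset.mul_sum]
  rw [hswap]
  apply knapsack hm lam (fun k => ∑ i ∈ G, (Q k i) ^ 2) hanti hlam0
  · intro k
    exact Finset.sum_nonneg (fun i _ => sq_nonneg _)
  · intro k
    calc ∑ i ∈ G, (Q k i) ^ 2 ≤ ∑ i, (Q k i) ^ 2 :=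
          Finset.sum_le_sum_of_subset_of_nonneg (Finset.subset_univ G)
            (fun i _ _ => sq_nonneg _)
      _ = 1 := hrow k
  · calc ∑ k, (∑ i ∈ G, (Q k i) ^ 2) = ∑ i ∈ G, (∑ k, (Q k i) ^ 2) := Finset.sum_comm
      _ = ∑ i ∈ G, (1 : ℝ) := Finset.sum_congr rfl (fun i _ => hcol i)
      _ = G.card := by rw [Finset.sum_const, nsmul_eq_mul, mul_one]
      _ ≤ m := by exact_mod_cast hG

lemma filter_lt_eq_map (d m : ℕ) (hm : m ≤ d) :
    Finset.univ.filter (fun i : Fin d => (i : ℕ) < m)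
      = Finset.map (Fin.castLEEmb hm) Finset.univ := by
  ext i
  simp only [Finset.mem_filter, Finset.mem_univ, true_and, Finset.mem_map]
  constructor
  · intro h
    exact ⟨⟨(i : ℕ), h⟩, by simp [Fin.castLEEmb, Fin.ext_iff]⟩
  · rintro ⟨j, -, rfl⟩
    simpa [Fin.castLEEmb] using j.isLt

lemma sorted_bound {d κ : ℕ} (hκd : κ ≤ d) {β α : ℝ} (hβ : 0 < β) (hα : 0 < α)
    (lam : Fin d → ℝ)
    (hanti : ∀ i j : Fin d, i ≤ j → lam j ≤ lam i) (hlam0 : ∀ i, 0 ≤ lam i)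
    (Q : Matrix (Fin d) (Fin d) ℝ)
    (hrow : ∀ k, ∑ i, (Q k i) ^ 2 = 1) (hcol : ∀ i, ∑ k, (Q k i) ^ 2 = 1)
    (T : Finset (Fin d)) (hT : T.card ≤ κ) :
    ∑ i ∈ T, gfun β α (∑ k, lam k * (Q k i) ^ 2)
      ≤ ∑ j : Fin κ, gfun β α (lam (Fin.castLE hκd j)) := by
  classical
  set s : Fin d → ℝ := fun i => ∑ k, lam k * (Q k i) ^ 2 with hsdef
  set n := T.card with hn
  have hnκ : n ≤ κ := hT
  set e := T.orderIsoOfFin rfl with he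
  set σ := Tuple.sort (fun j : Fin n => -(s (e j))) with hσ
  set φ : Fin n → Fin d := fun j => (e (σ j) : Fin d) with hφ
  have hφinj : Function.Injective φ := by
    intro x y hxy
    exact σ.injective (e.injective (Subtype.ext hxy))
  set a : ℕ → ℝ := fun j => if h : j < n then s (φ ⟨j, h⟩) else 0 with ha
  set b : ℕ → ℝ := fun j => if h : j < d then lam ⟨j, h⟩ else 0 with hb
  have hfanti : ∀ p q : Fin n, p ≤ q → s (φ q) ≤ s (φ p) := by
    intro p q hpq
    have := Tuple.monotone_sort (fun j : Fin n => -(s (e j))) hpq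
    simp only [Function.comp_apply] at this
    rw [hφ]
    dsimp only
    linarith
  have haa : ∀ i j : ℕ, i ≤ j → j < n → a j ≤ a i := by
    intro i j hij hj
    have hi : i < n := lt_of_le_of_lt hij hj
    rw [ha]
    dsimp only
    rw [dif_pos hj, dif_pos hi]
    exact hfanti ⟨i, hi⟩ ⟨j, hj⟩ hij
  have hb0 : ∀ j, 0 ≤ b j := by
    intro j
    rw [hb]
    dsimp only
    split_ifs with h
    · exact hlam0 _
    · exact le_refl 0
  have hpart : ∀ i, i < n → ∑ j ∈ Finset.range (i + 1), a j ≤ ∑ j ∈ Finset.range (i + 1), b j := by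
    intro i hi
    have hi1n : i + 1 ≤ n := hi
    have hi1d : i + 1 ≤ d := le_trans hi1n (le_trans hnκ hκd)
    set G : Finset (Fin d) :=
      Finset.image (fun j : Fin (i + 1) => φ (Fin.castLE hi1n j)) Finset.univ with hG
    have hGinj : Function.Injective (fun j : Fin (i + 1) => φ (Fin.castLE hi1n j)) := by
      intro x y hxy
      have := hφinj hxy
      exact Fin.castLE_injective hi1n this
    have hGcard : G.card ≤ i + 1 := by
      rw [hG, Finset.card_image_of_injective _ hGinj, Finset.card_univ, Fintype.card_fin]
    have hLHS : ∑ j ∈ Finset.range (i + 1), a j = ∑ x ∈ G, s x := by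
      rw [Finset.sum_range, hG, Finset.sum_image (fun x _ y _ h => hGinj h)]
      apply Finset.sum_congr rfl
      intro j _
      rw [ha]
      dsimp only
      rw [dif_pos (lt_of_lt_of_le j.isLt hi1n)]
      congr 1
    have hRHS : ∑ j ∈ Finset.range (i + 1), b j
        = ∑ l ∈ Finset.univ.filter (fun l : Fin d => (l : ℕ) < i + 1), lam l := by
      rw [filter_lt_eq_map d (i + 1) hi1d, Finset.sum_map, Finset.sum_range]
      apply Finset.sum_congr rfl
      intro j _
      rw [hb]
      dsimp only
      rw [dif_pos (lt_of_lt_of_le j.isLt hi1d)]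
      congr 1
    rw [hLHS, hRHS]
    have := kyfan hi1d lam hanti hlam0 Q hrow hcol G hGcard
    simpa only [hsdef] using this
  have key := hlp hβ hα n κ hnκ a b haa hb0 hpart
  have hLHS2 : ∑ i ∈ T, gfun β α (s i) = ∑ j ∈ Finset.range n, gfun β α (a j) := by
    rw [Finset.sum_range]
    calc ∑ i ∈ T, gfun β α (s i) = ∑ x : T, gfun β α (s x) :=
          (Finset.sum_coe_sort T (fun i => gfun β α (s i))).symm
      _ = ∑ j : Fin n, gfun β α (s (e j)) :=
          (Equiv.sum_comp e.toEquiv (fun x : T => gfun β α (s x))).symm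
      _ = ∑ j : Fin n, gfun β α (s (e (σ j))) :=
          (Equiv.sum_comp σ (fun j : Fin n => gfun β α (s (e j)))).symm
      _ = ∑ j : Fin n, gfun β α (a (j : ℕ)) := by
          apply Finset.sum_congr rfl
          intro j _
          rw [ha]
          dsimp only
          rw [dif_pos j.isLt]
  have hRHS2 : ∑ j ∈ Finset.range κ, gfun β α (b j)
      = ∑ j : Fin κ, gfun β α (lam (Fin.castLE hκd j)) := by
    rw [Finset.sum_range]
    apply Finset.sum_congr rfl
    intro j _
    rw [hb]
    dsimp only
    rw [dif_pos (lt_of_lt_of_le j.isLt hκd)]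
    congr 1
  rw [hLHS2, ← hRHS2]
  exact key

lemma sum_extend {d κ : ℕ} (hκd : κ ≤ d) (F : Fin d → ℝ)
    (hF : ∀ l : Fin d, ¬ ((l : ℕ) < κ) → F l = 0) :
    ∑ l, F l = ∑ j : Fin κ, F (Fin.castLE hκd j) := by
  classical
  have h1 : ∑ j : Fin κ, F (Fin.castLE hκd j)
      = ∑ l ∈ Finset.map (Fin.castLEEmb hκd) Finset.univ, F l := by
    rw [Finset.sum_map]
    rfl
  rw [h1, ← filter_lt_eq_map d κ hκd]
  rw [Finset.sum_filter_of_ne]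
  intro l _ hne
  by_contra hcon
  exact hne (hF l hcon)

open Matrix in
lemma combine_diag {d : ℕ} (V : Matrix (Fin d) (Fin d) ℝ) (hVV : V * Vᵀ = 1)
    (α t : ℝ) (e : Fin d → ℝ) :
    α • (1 : Matrix (Fin d) (Fin d) ℝ) + t • (V * Matrix.diagonal e * Vᵀ)
      = V * Matrix.diagonal (fun i => α + t * e i) * Vᵀ := by
  have e3 : Matrix.diagonal (fun i : Fin d => α + t * e i)
      = α • (1 : Matrix (Fin d) (Fin d) ℝ) + t • Matrix.diagonal e := by
    ext i j
    by_cases h : i = j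
    · subst h; simp [Matrix.diagonal_apply_eq, Matrix.one_apply_eq]
    · simp [Matrix.diagonal_apply_ne _ h, Matrix.one_apply_ne h]
  have e1 : V * (α • (1 : Matrix (Fin d) (Fin d) ℝ)) * Vᵀ = α • (1 : Matrix (Fin d) (Fin d) ℝ) := by
    rw [Matrix.mul_smul, Matrix.mul_one, Matrix.smul_mul, hVV]
  have e2 : V * (t • Matrix.diagonal e) * Vᵀ = t • (V * Matrix.diagonal e * Vᵀ) := by
    rw [Matrix.mul_smul, Matrix.smul_mul]
  rw [e3, Matrix.mul_add, Matrix.add_mul, e1, e2]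

open Matrix in
lemma submatrix_diag {d κ : ℕ} (hκd : κ ≤ d) (M : Matrix (Fin d) (Fin d) ℝ) (f : Fin κ → ℝ) :
    (M.submatrix id (Fin.castLE hκd)) * Matrix.diagonal f * (M.submatrix id (Fin.castLE hκd))ᵀ
      = M * Matrix.diagonal (fun l : Fin d => if h : (l : ℕ) < κ then f ⟨l, h⟩ else 0) * Mᵀ := by
  ext i i'
  rw [Matrix.mul_apply, Matrix.mul_apply]
  simp only [Matrix.mul_diagonal, Matrix.transpose_apply, Matrix.submatrix_apply, id]
  symm
  rw [sum_extend hκd (fun l => M i l * (if h : (l : ℕ) < κ then f ⟨l, h⟩ else 0) * M i' l)]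
  · apply Finset.sum_congr rfl
    intro j _
    have hj : ((Fin.castLE hκd j : Fin d) : ℕ) < κ := j.isLt
    rw [dif_pos hj]
    congr 1
  · intro l hl
    rw [dif_neg hl, mul_zero, zero_mul]

/-- MLE for the affine-decoder β-VAE objective (pPCA form). Let `Ŝ` be a
symmetric positive semidefinite d×d matrix with decreasingly ordered
eigenvalues `λ` and orthonormal eigenvectors `u`. With
`C(W) = αI + β⁻¹WWᵀ` and `L(W) = −½(tr(C(W)⁻¹Ŝ) + β·log det C(W))`, the matrix
`Ŵ = U_κ · diag(√(k₁ − βα), …, √(k_κ − βα))`, where `k_j = max(λ_j, βα)` and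
`U_κ` collects the top κ eigenvectors, is a global maximizer of `L`, and `L`
is invariant under right multiplication of `Ŵ` by orthogonal matrices. -/
theorem stmt_16 (d κ : ℕ) (hκ : 1 ≤ κ) (hκd : κ ≤ d)
    (β α : ℝ) (hβ : 0 < β) (hα : 0 < α)
    (Shat : Matrix (Fin d) (Fin d) ℝ) (hShat : Shat.PosSemidef)
    (lam : Fin d → ℝ) (hlam : ∀ i j : Fin d, i ≤ j → lam j ≤ lam i)
    (u : Fin d → Fin d → ℝ)
    (heig : ∀ i, Shat *ᵥ u i = lam i • u i)
    (horth : ∀ i j, u i ⬝ᵥ u j = if i = j then (1 : ℝ) else 0)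
    (k : Fin κ → ℝ)
    (hk : ∀ j : Fin κ, k j = if β * α ≤ lam (Fin.castLE hκd j)
      then lam (Fin.castLE hκd j) else β * α)
    (Uκ : Matrix (Fin d) (Fin κ) ℝ)
    (hU : ∀ (i : Fin d) (j : Fin κ), Uκ i j = u (Fin.castLE hκd j) i)
    (What : Matrix (Fin d) (Fin κ) ℝ)
    (hWhat : What = Uκ * Matrix.diagonal fun j => Real.sqrt (k j - β * α))
    (C : Matrix (Fin d) (Fin κ) ℝ → Matrix (Fin d) (Fin d) ℝ)
    (hC : ∀ W, C W = α • (1 : Matrix (Fin d) (Fin d) ℝ) + β⁻¹ • (W * Wᵀ))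
    (L : Matrix (Fin d) (Fin κ) ℝ → ℝ)
    (hL : ∀ W, L W = -(1 / 2) * (((C W)⁻¹ * Shat).trace
      + β * Real.log (C W).det)) :
    (∀ W : Matrix (Fin d) (Fin κ) ℝ, L W ≤ L What) ∧
    ∀ R : Matrix (Fin κ) (Fin κ) ℝ, R * Rᵀ = 1 → L (What * R) = L What := by
  classical
  have hβα : 0 < β * α := mul_pos hβ hα
  -- eigenvector matrix of Shat
  set Umat : Matrix (Fin d) (Fin d) ℝ := Matrix.of (fun i k0 => u k0 i) with hUmat
  have hUorth : Umatᵀ * Umat = 1 := by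
    ext k0 l
    rw [Matrix.mul_apply]
    simp only [Matrix.transpose_apply, hUmat, Matrix.of_apply]
    have := horth k0 l
    rw [dotProduct] at this
    rw [this, Matrix.one_apply]
  have hUU : Umat * Umatᵀ = 1 := mul_eq_one_comm.mp hUorth
  have hSU : Shat * Umat = Umat * Matrix.diagonal lam := by
    ext i k0
    rw [Matrix.mul_apply, Matrix.mul_diagonal]
    have := congrFun (heig k0) i
    rw [Matrix.mulVec, dotProduct] at this
    simp only [Pi.smul_apply, smul_eq_mul] at this
    simp only [hUmat, Matrix.of_apply]
    rw [this]
    ring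
  have hSdecomp : Shat = Umat * Matrix.diagonal lam * Umatᵀ := by
    calc Shat = Shat * (Umat * Umatᵀ) := by rw [hUU, Matrix.mul_one]
      _ = (Shat * Umat) * Umatᵀ := by rw [Matrix.mul_assoc]
      _ = Umat * Matrix.diagonal lam * Umatᵀ := by rw [hSU]
  have hlam0 : ∀ i, 0 ≤ lam i := by
    intro i
    have h2 := hShat.dotProduct_mulVec_nonneg (u i)
    rw [heig i] at h2
    have hst : star (u i) = u i := by
      funext j; simp
    rw [hst, dotProduct_smul] at h2
    rw [horth i i, if_pos rfl] at h2
    simpa using h2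
  -- facts about k
  have hk1 : ∀ j, β * α ≤ k j := by
    intro j
    rw [hk j]
    split_ifs with h
    · exact h
    · exact le_refl _
  have hk2 : ∀ j, 0 ≤ k j - β * α := fun j => by linarith [hk1 j]
  -- chat
  set chat : Fin d → ℝ := fun i => if h : (i : ℕ) < κ then k ⟨i, h⟩ / β else α with hchat
  have hchatpos : ∀ i, 0 < chat i := by
    intro i
    rw [hchat]
    dsimp only
    split_ifs with h
    · have h0 : 0 < k ⟨i, h⟩ := lt_of_lt_of_le hβα (hk1 _)
      positivity
    · exact hα
  -- What * Whatᵀ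
  have hUκsub : Uκ = Umat.submatrix id (Fin.castLE hκd) := by
    ext i j
    rw [hU, Matrix.submatrix_apply]
    rfl
  have hDD : (Matrix.diagonal fun j => Real.sqrt (k j - β * α))
      * (Matrix.diagonal fun j => Real.sqrt (k j - β * α))
      = Matrix.diagonal (fun j => k j - β * α) := by
    rw [Matrix.diagonal_mul_diagonal]
    exact congrArg Matrix.diagonal (funext fun j => Real.mul_self_sqrt (hk2 j))
  have hWWT : What * Whatᵀ
      = Umat * Matrix.diagonal
          (fun l : Fin d => if h : (l : ℕ) < κ then k ⟨l, h⟩ - β * α else 0) * Umatᵀ := by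
    rw [hWhat, Matrix.transpose_mul, Matrix.diagonal_transpose]
    calc Uκ * (Matrix.diagonal fun j => Real.sqrt (k j - β * α))
          * ((Matrix.diagonal fun j => Real.sqrt (k j - β * α)) * Uκᵀ)
        = Uκ * ((Matrix.diagonal fun j => Real.sqrt (k j - β * α))
          * (Matrix.diagonal fun j => Real.sqrt (k j - β * α))) * Uκᵀ := by
          simp only [Matrix.mul_assoc]
      _ = Uκ * Matrix.diagonal (fun j => k j - β * α) * Uκᵀ := by rw [hDD]
      _ = _ := by
          rw [hUκsub]
          exact submatrix_diag hκd Umat (fun j => k j - β * α)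
  have hCWhat : C What = Umat * Matrix.diagonal chat * Umatᵀ := by
    rw [hC, hWWT, combine_diag Umat hUU α β⁻¹ _]
    have : (fun i : Fin d => α + β⁻¹ * (if h : (i : ℕ) < κ then k ⟨i, h⟩ - β * α else 0)) = chat := by
      funext i
      rw [hchat]
      dsimp only
      split_ifs with h
      · field_simp
        ring
      · ring
    rw [this]
  have hUSU : ∀ i, (Umatᵀ * Shat * Umat) i i = lam i := by
    have hd : Umatᵀ * Shat * Umat = Matrix.diagonal lam := by
      calc Umatᵀ * Shat * Umat = Umatᵀ * (Umat * Matrix.diagonal lam * Umatᵀ) * Umat := by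
            rw [← hSdecomp]
        _ = (Umatᵀ * Umat) * Matrix.diagonal lam * (Umatᵀ * Umat) := by
            simp only [Matrix.mul_assoc]
        _ = Matrix.diagonal lam := by rw [hUorth]; simp
    intro i
    rw [hd, Matrix.diagonal_apply_eq]
  have hobjWhat : ((C What)⁻¹ * Shat).trace + β * Real.log (C What).det
      = ∑ i, (lam i / chat i + β * Real.log (chat i)) := by
    rw [hCWhat, objective_formula β Shat Umat hUorth chat hchatpos]
    apply Finset.sum_congr rfl
    intro i _
    rw [hUSU i]
  have hWhatEq : ∑ i, (lam i / chat i + β * Real.log (chat i))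
      = (∑ i, (lam i / α + β * Real.log α))
        - ∑ j : Fin κ, gfun β α (lam (Fin.castLE hκd j)) := by
    have per : ∀ i : Fin d, lam i / chat i + β * Real.log (chat i)
        = lam i / α + β * Real.log α
          - (if h : (i : ℕ) < κ then gfun β α (lam i) else 0) := by
      intro i
      rw [hchat]
      dsimp only
      split_ifs with h
      · have hcast : lam (Fin.castLE hκd ⟨(i : ℕ), h⟩) = lam i := by congr 1
        rw [hk ⟨(i : ℕ), h⟩, hcast]
        unfold gfun
        split_ifs with h2
        · have hlami : 0 < lam i := lt_of_lt_of_le hβα h2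
          have hdiv : lam i / (lam i / β) = β := by field_simp
          rw [hdiv]
          ring
        · have hba : β * α / β = α := by field_simp
          rw [hba]
          ring
      · ring
    rw [Finset.sum_congr rfl (fun i _ => per i), Finset.sum_sub_distrib]
    congr 1
    rw [sum_extend hκd _ (fun l hl => dif_neg hl)]
    apply Finset.sum_congr rfl
    intro j _
    exact dif_pos j.isLt
  constructor
  · -- global maximizer
    intro W
    have hpsd : (W * Wᵀ).PosSemidef := by
      have := Matrix.posSemidef_self_mul_conjTranspose W
      rwa [Matrix.conjTranspose_eq_transpose_of_trivial] at this
    have hA : (W * Wᵀ).IsHermitian := hpsd.1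
    set μ : Fin d → ℝ := hA.eigenvalues with hμ
    set V : Matrix (Fin d) (Fin d) ℝ := (hA.eigenvectorUnitary : Matrix (Fin d) (Fin d) ℝ)
      with hV
    have hVstar : (star (hA.eigenvectorUnitary : Matrix (Fin d) (Fin d) ℝ)) = Vᵀ := by
      rw [Matrix.star_eq_conjTranspose, Matrix.conjTranspose_eq_transpose_of_trivial, hV]
    have hVV : V * Vᵀ = 1 := by
      have := Matrix.mem_unitaryGroup_iff.mp hA.eigenvectorUnitary.2
      rwa [hVstar] at this
    have hVorth : Vᵀ * V = 1 := mul_eq_one_comm.mp hVV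
    have hspec : W * Wᵀ = V * Matrix.diagonal μ * Vᵀ := by
      have := hA.spectral_theorem
      rw [Unitary.conjStarAlgAut_apply] at this
      rwa [hVstar, show (RCLike.ofReal ∘ hA.eigenvalues : Fin d → ℝ) = μ from by
        funext i; simp [hμ]] at this
    have hμ0 : ∀ i, 0 ≤ μ i := hpsd.eigenvalues_nonneg
    set T : Finset (Fin d) := Finset.univ.filter (fun i => μ i ≠ 0) with hT
    have hTcard : T.card ≤ κ := by
      have h1 : (W * Wᵀ).rank ≤ κ :=
        le_trans (Matrix.rank_mul_le_left W Wᵀ) (Matrix.rank_le_width W)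
      have h2 := hA.rank_eq_card_non_zero_eigs
      have h3 : T.card = Fintype.card {i // μ i ≠ 0} := (Fintype.card_subtype _).symm
      rw [h3, ← h2]
      exact h1
    set cW : Fin d → ℝ := fun i => α + β⁻¹ * μ i with hcW
    have hcWα : ∀ i, α ≤ cW i := by
      intro i
      rw [hcW]
      dsimp only
      have : 0 ≤ β⁻¹ * μ i := mul_nonneg (by positivity) (hμ0 i)
      linarith
    have hcWpos : ∀ i, 0 < cW i := fun i => lt_of_lt_of_le hα (hcWα i)
    have hCW : C W = V * Matrix.diagonal cW * Vᵀ := by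
      rw [hC, hspec, combine_diag V hVV α β⁻¹ μ]
    set Q : Matrix (Fin d) (Fin d) ℝ := Umatᵀ * V with hQ
    have hQ1 : Qᵀ * Q = 1 := by
      rw [hQ, Matrix.transpose_mul, Matrix.transpose_transpose]
      calc Vᵀ * Umat * (Umatᵀ * V) = Vᵀ * (Umat * Umatᵀ) * V := by
            simp only [Matrix.mul_assoc]
        _ = 1 := by rw [hUU, Matrix.mul_one, hVorth]
    have hQ2 : Q * Qᵀ = 1 := mul_eq_one_comm.mp hQ1
    have hrow : ∀ k0, ∑ i, (Q k0 i) ^ 2 = 1 := by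
      intro k0
      have := congrFun (congrFun hQ2 k0) k0
      rw [Matrix.mul_apply] at this
      simp only [Matrix.transpose_apply] at this
      rw [Matrix.one_apply_eq] at this
      rw [← this]
      apply Finset.sum_congr rfl
      intro i _
      ring
    have hcol : ∀ i, ∑ k0, (Q k0 i) ^ 2 = 1 := by
      intro i
      have := congrFun (congrFun hQ1 i) i
      rw [Matrix.mul_apply] at this
      simp only [Matrix.transpose_apply] at this
      rw [Matrix.one_apply_eq] at this
      rw [← this]
      apply Finset.sum_congr rfl
      intro k0 _
      ring
    have hVSV : Vᵀ * Shat * V = Qᵀ * Matrix.diagonal lam * Q := by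
      rw [hQ, Matrix.transpose_mul, Matrix.transpose_transpose]
      calc Vᵀ * Shat * V = Vᵀ * (Umat * Matrix.diagonal lam * Umatᵀ) * V := by rw [← hSdecomp]
        _ = (Vᵀ * Umat) * Matrix.diagonal lam * (Umatᵀ * V) := by simp only [Matrix.mul_assoc]
    have hsQ : ∀ i, (Vᵀ * Shat * V) i i = ∑ k0, lam k0 * (Q k0 i) ^ 2 := by
      intro i
      rw [hVSV, Matrix.mul_apply]
      apply Finset.sum_congr rfl
      intro k0 _
      rw [Matrix.mul_diagonal]
      simp only [Matrix.transpose_apply]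
      ring
    have hs0 : ∀ i, 0 ≤ (Vᵀ * Shat * V) i i := by
      intro i
      rw [hsQ i]
      exact Finset.sum_nonneg (fun k0 _ => mul_nonneg (hlam0 k0) (sq_nonneg _))
    have hobjW : ((C W)⁻¹ * Shat).trace + β * Real.log (C W).det
        = ∑ i, ((Vᵀ * Shat * V) i i / cW i + β * Real.log (cW i)) := by
      rw [hCW, objective_formula β Shat V hVorth cW hcWpos]
    have hper : ∀ i : Fin d, (Vᵀ * Shat * V) i i / α + β * Real.log α
        - (if i ∈ T then gfun β α ((Vᵀ * Shat * V) i i) else 0)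
        ≤ (Vᵀ * Shat * V) i i / cW i + β * Real.log (cW i) := by
      intro i
      by_cases hiT : i ∈ T
      · rw [if_pos hiT]
        exact scalar1 hβ hα (hs0 i) (hcWα i)
      · rw [if_neg hiT]
        have hμi : μ i = 0 := by
          rw [hT] at hiT
          simpa using hiT
        have : cW i = α := by rw [hcW]; dsimp only; rw [hμi]; ring
        rw [this]
        linarith
    have hsum1 : (∑ i, ((Vᵀ * Shat * V) i i / α + β * Real.log α))
        - (∑ i ∈ T, gfun β α ((Vᵀ * Shat * V) i i))
        ≤ ∑ i, ((Vᵀ * Shat * V) i i / cW i + β * Real.log (cW i)) := by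
      have h := Finset.sum_le_sum (fun i (_ : i ∈ Finset.univ) => hper i)
      rw [Finset.sum_sub_distrib] at h
      rw [Finset.sum_ite_mem, Finset.univ_inter] at h
      exact h
    have htr : ∑ i, (Vᵀ * Shat * V) i i = ∑ i, lam i := by
      rw [Finset.sum_congr rfl (fun i (_ : i ∈ Finset.univ) => hsQ i), Finset.sum_comm]
      apply Finset.sum_congr rfl
      intro k0 _
      rw [← Finset.mul_sum, hrow k0, mul_one]
    have hmain : ∑ i ∈ T, gfun β α ((Vᵀ * Shat * V) i i)
        ≤ ∑ j : Fin κ, gfun β α (lam (Fin.castLE hκd j)) := by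
      rw [Finset.sum_congr rfl (fun i (_ : i ∈ T) => by rw [hsQ i])]
      exact sorted_bound hκd hβ hα lam hlam hlam0 Q hrow hcol T hTcard
    have heqS : ∑ i, ((Vᵀ * Shat * V) i i / α + β * Real.log α)
        = ∑ i, (lam i / α + β * Real.log α) := by
      rw [Finset.sum_add_distrib, Finset.sum_add_distrib, ← Finset.sum_div, ← Finset.sum_div,
        htr]
    have hfinal : ((C What)⁻¹ * Shat).trace + β * Real.log (C What).det
        ≤ ((C W)⁻¹ * Shat).trace + β * Real.log (C W).det := by
      rw [hobjWhat, hWhatEq, hobjW]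
      calc (∑ i, (lam i / α + β * Real.log α))
            - ∑ j : Fin κ, gfun β α (lam (Fin.castLE hκd j))
          ≤ (∑ i, (lam i / α + β * Real.log α))
            - ∑ i ∈ T, gfun β α ((Vᵀ * Shat * V) i i) := by linarith [hmain]
        _ = (∑ i, ((Vᵀ * Shat * V) i i / α + β * Real.log α))
            - ∑ i ∈ T, gfun β α ((Vᵀ * Shat * V) i i) := by rw [heqS]
        _ ≤ _ := hsum1
    rw [hL, hL]
    linarith
  · -- rotation invariance
    intro R hR
    have hCR : C (What * R) = C What := by
      rw [hC, hC]
      congr 1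
      rw [Matrix.transpose_mul]
      congr 1
      calc What * R * (Rᵀ * Whatᵀ) = What * (R * Rᵀ) * Whatᵀ := by
            simp only [Matrix.mul_assoc]
        _ = What * Whatᵀ := by rw [hR, Matrix.mul_one]
    rw [hL, hL, hCR]
end
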